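/- Let q be a prime power, ℓ, m ≥ 1, let A and B be ℓm×ℓm matrices over F_q that are F_q-linear combinations of the monomials x^a y^b (x = S_ℓ ⊗ I_m, y = I_ℓ ⊗ S_m), and let γ₁, γ₂, δ₁, δ₂ ∈ F_q be nonzero. Set H_X = [γ₁A | γ₂B] and H_Z = [δ₁Bᵀ | δ₂Aᵀ]. Then 2ℓm − rank_{F_q}(H_X) − rank_{F_q}(H_Z) = 2 · dim_{F_q}(ker A ∩ ker B); i.e., the qudit bivariate bicycle code on n = 2ℓm physical qudits encodes k = 2 · dim(ker A ∩ ker B) logical qudits. -/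

import Mathlib

open Matrix Kronecker

/-- The ℓ×ℓ cyclic shift matrix over `F`: entry `(i,j)` is 1 iff `j ≡ i+1 (mod ℓ)`. -/
def cyclicShift (ℓ : ℕ) [NeZero ℓ] (F : Type*) [Zero F] [One F] :
    Matrix (ZMod ℓ) (ZMod ℓ) F :=
  fun i j => if j = i + 1 then 1 else 0

section Aux

variable {F : Type*} [Field F]

lemma cyclicShift_pow_apply (ℓ : ℕ) [NeZero ℓ] (a : ℕ) (i j : ZMod ℓ) :
    ((cyclicShift ℓ F) ^ a) i j = if j = i + (a : ZMod ℓ) then (1 : F) else 0 := by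
  induction a generalizing i j with
  | zero => simp [Matrix.one_apply, eq_comm]
  | succ a ih =>
    rw [pow_succ, Matrix.mul_apply]
    push_cast
    rw [Finset.sum_eq_single (i + (a : ZMod ℓ))]
    · simp [ih, cyclicShift, add_assoc]
    · intro k _ hk
      simp [ih, hk]
    · simp
lemma kron_pow_left {α β : Type*} [Fintype α] [DecidableEq α] [Fintype β] [DecidableEq β]
    (C : Matrix α α F) (a : ℕ) :
    (C ⊗ₖ (1 : Matrix β β F)) ^ a = (C ^ a) ⊗ₖ (1 : Matrix β β F) := by
  induction a with
  | zero => simp [Matrix.one_kronecker_one]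
  | succ a ih => rw [pow_succ, ih, ← Matrix.mul_kronecker_mul, one_mul, ← pow_succ]

lemma kron_pow_right {α β : Type*} [Fintype α] [DecidableEq α] [Fintype β] [DecidableEq β]
    (D : Matrix β β F) (b : ℕ) :
    ((1 : Matrix α α F) ⊗ₖ D) ^ b = (1 : Matrix α α F) ⊗ₖ (D ^ b) := by
  induction b with
  | zero => simp [Matrix.one_kronecker_one]
  | succ b ih => rw [pow_succ, ih, ← Matrix.mul_kronecker_mul, one_mul, ← pow_succ]

end Aux

theorem bb_code_dimension
    {F : Type*} [Field F] [Fintype F] (ℓ m : ℕ) [NeZero ℓ] [NeZero m]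
    (x y A B : Matrix (ZMod ℓ × ZMod m) (ZMod ℓ × ZMod m) F)
    (hx : x = cyclicShift ℓ F ⊗ₖ (1 : Matrix (ZMod m) (ZMod m) F))
    (hy : y = (1 : Matrix (ZMod ℓ) (ZMod ℓ) F) ⊗ₖ cyclicShift m F)
    (hA : A ∈ Submodule.span F {M : Matrix (ZMod ℓ × ZMod m) (ZMod ℓ × ZMod m) F |
        ∃ a b : ℕ, M = x ^ a * y ^ b})
    (hB : B ∈ Submodule.span F {M : Matrix (ZMod ℓ × ZMod m) (ZMod ℓ × ZMod m) F |
        ∃ a b : ℕ, M = x ^ a * y ^ b})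
    (γ₁ γ₂ δ₁ δ₂ : F) (hγ₁ : γ₁ ≠ 0) (hγ₂ : γ₂ ≠ 0) (hδ₁ : δ₁ ≠ 0) (hδ₂ : δ₂ ≠ 0)
    (HX HZ : Matrix (ZMod ℓ × ZMod m) ((ZMod ℓ × ZMod m) ⊕ (ZMod ℓ × ZMod m)) F)
    (hHX : HX = fromCols (γ₁ • A) (γ₂ • B))
    (hHZ : HZ = fromCols (δ₁ • Bᵀ) (δ₂ • Aᵀ)) :
    (2 * (ℓ * m) : ℤ) - HX.rank - HZ.rank =
      2 * Module.finrank F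
        ↥(LinearMap.ker A.mulVecLin ⊓ LinearMap.ker B.mulVecLin) := by
  -- the negation permutation
  have hνs : (Equiv.neg (ZMod ℓ × ZMod m)).symm = Equiv.neg (ZMod ℓ × ZMod m) :=
    Equiv.neg_symm
  -- transpose of matrices in the span is conjugation by ν
  have hT : ∀ M ∈ Submodule.span F
      {M : Matrix (ZMod ℓ × ZMod m) (ZMod ℓ × ZMod m) F | ∃ a b : ℕ, M = x ^ a * y ^ b},
      Mᵀ = M.submatrix (Equiv.neg (ZMod ℓ × ZMod m)) (Equiv.neg (ZMod ℓ × ZMod m)) := by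
    intro M hM
    induction hM using Submodule.span_induction with
    | mem M hM =>
      obtain ⟨a, b, rfl⟩ := hM
      rw [hx, hy, kron_pow_left, kron_pow_right, ← Matrix.mul_kronecker_mul, mul_one, one_mul]
      ext ⟨i, j⟩ ⟨i', j'⟩
      simp only [Matrix.transpose_apply, Matrix.submatrix_apply, Matrix.kroneckerMap_apply,
        cyclicShift_pow_apply, Equiv.neg_apply, Prod.fst_neg, Prod.snd_neg]
      have h1 : (-i' = -i + (a : ZMod ℓ)) ↔ (i = i' + (a : ZMod ℓ)) := by
        constructor <;> intro h <;> linear_combination h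
      have h2 : (-j' = -j + (b : ZMod m)) ↔ (j = j' + (b : ZMod m)) := by
        constructor <;> intro h <;> linear_combination h
      simp only [h1, h2]
    | zero => simp
    | add u v _ _ hu hv =>
      rw [Matrix.transpose_add, hu, hv]
      ext p q
      simp
    | smul c u _ hu =>
      rw [Matrix.transpose_smul, hu]
      ext p q
      simp
  -- kernel of the transpose
  have hkermem : ∀ (M : Matrix (ZMod ℓ × ZMod m) (ZMod ℓ × ZMod m) F),
      Mᵀ = M.submatrix (Equiv.neg (ZMod ℓ × ZMod m)) (Equiv.neg (ZMod ℓ × ZMod m)) →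
      ∀ v : (ZMod ℓ × ZMod m) → F,
      (v ∈ LinearMap.ker Mᵀ.mulVecLin ↔
        v ∘ (Equiv.neg (ZMod ℓ × ZMod m)) ∈ LinearMap.ker M.mulVecLin) := by
    intro M hM v
    rw [LinearMap.mem_ker, LinearMap.mem_ker, Matrix.mulVecLin_apply, Matrix.mulVecLin_apply,
      hM, Matrix.submatrix_mulVec_equiv, hνs]
    constructor
    · intro h
      funext p
      have := congrFun h (-p)
      simpa using this
    · intro h
      funext p
      simpa using congrFun h ((Equiv.neg (ZMod ℓ × ZMod m)) p)
  have hAT := hT A hA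
  have hBT := hT B hB
  -- the two kernel intersections have the same dimension
  have hmap : Submodule.map ((LinearEquiv.funCongrLeft F F (Equiv.neg (ZMod ℓ × ZMod m))) :
        ((ZMod ℓ × ZMod m) → F) →ₗ[F] ((ZMod ℓ × ZMod m) → F))
      (LinearMap.ker Aᵀ.mulVecLin ⊓ LinearMap.ker Bᵀ.mulVecLin) =
      LinearMap.ker A.mulVecLin ⊓ LinearMap.ker B.mulVecLin := by
    ext w
    simp only [Submodule.mem_map, Submodule.mem_inf]
    constructor
    · rintro ⟨v, ⟨hv1, hv2⟩, rfl⟩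
      exact ⟨(hkermem A hAT v).1 hv1, (hkermem B hBT v).1 hv2⟩
    · rintro ⟨h1, h2⟩
      have hcomp : (w ∘ (Equiv.neg (ZMod ℓ × ZMod m))) ∘ (Equiv.neg (ZMod ℓ × ZMod m)) = w := by
        funext p
        simp
      refine ⟨w ∘ (Equiv.neg (ZMod ℓ × ZMod m)), ⟨?_, ?_⟩, ?_⟩
      · rw [hkermem A hAT, hcomp]; exact h1
      · rw [hkermem B hBT, hcomp]; exact h2
      · show (w ∘ (Equiv.neg (ZMod ℓ × ZMod m))) ∘ (Equiv.neg (ZMod ℓ × ZMod m)) = w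
        exact hcomp
  have hdim : Module.finrank F
      ↥(LinearMap.ker Aᵀ.mulVecLin ⊓ LinearMap.ker Bᵀ.mulVecLin) =
      Module.finrank F ↥(LinearMap.ker A.mulVecLin ⊓ LinearMap.ker B.mulVecLin) := by
    rw [← hmap]
    exact (LinearEquiv.finrank_map_eq _ _).symm
  -- kernel of fromRows
  have hkerRows : ∀ (M N : Matrix (ZMod ℓ × ZMod m) (ZMod ℓ × ZMod m) F),
      LinearMap.ker (fromRows M N).mulVecLin =
        LinearMap.ker M.mulVecLin ⊓ LinearMap.ker N.mulVecLin := by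
    intro M N
    ext v
    simp only [LinearMap.mem_ker, Submodule.mem_inf, Matrix.mulVecLin_apply,
      Matrix.fromRows_mulVec]
    constructor
    · intro h
      exact ⟨funext fun i => congrFun h (Sum.inl i), funext fun i => congrFun h (Sum.inr i)⟩
    · rintro ⟨h1, h2⟩
      funext i
      cases i with
      | inl i => exact congrFun h1 i
      | inr i => exact congrFun h2 i
  have cardP : Fintype.card (ZMod ℓ × ZMod m) = ℓ * m := by
    simp [ZMod.card]
  -- rank of the block matrices
  have hrank : ∀ (M N : Matrix (ZMod ℓ × ZMod m) (ZMod ℓ × ZMod m) F) (c d : F),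
      c ≠ 0 → d ≠ 0 →
      (fromCols (c • M) (d • N)).rank +
        Module.finrank F ↥(LinearMap.ker Mᵀ.mulVecLin ⊓ LinearMap.ker Nᵀ.mulVecLin)
        = ℓ * m := by
    intro M N c d hc hd
    rw [← Matrix.rank_transpose, Matrix.transpose_fromCols, Matrix.transpose_smul,
      Matrix.transpose_smul]
    have hsm : ∀ (c : F) (M : Matrix (ZMod ℓ × ZMod m) (ZMod ℓ × ZMod m) F),
        (c • M).mulVecLin = c • M.mulVecLin := by
      intro c M
      ext v
      simp [Matrix.mulVecLin_apply, Matrix.smul_mulVec]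
    have hker : LinearMap.ker (fromRows (c • Mᵀ) (d • Nᵀ)).mulVecLin =
        LinearMap.ker Mᵀ.mulVecLin ⊓ LinearMap.ker Nᵀ.mulVecLin := by
      rw [hkerRows, hsm, hsm, LinearMap.ker_smul _ _ hc, LinearMap.ker_smul _ _ hd]
    rw [Matrix.rank, ← hker, LinearMap.finrank_range_add_finrank_ker, Module.finrank_pi, cardP]
  have e1 : HX.rank +
      Module.finrank F ↥(LinearMap.ker A.mulVecLin ⊓ LinearMap.ker B.mulVecLin) = ℓ * m := by
    rw [hHX, ← hdim]
    exact hrank A B γ₁ γ₂ hγ₁ hγ₂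
  have e2 : HZ.rank +
      Module.finrank F ↥(LinearMap.ker A.mulVecLin ⊓ LinearMap.ker B.mulVecLin) = ℓ * m := by
    have := hrank Bᵀ Aᵀ δ₁ δ₂ hδ₁ hδ₂
    rw [Matrix.transpose_transpose, Matrix.transpose_transpose, inf_comm] at this
    rw [hHZ]
    exact this
  have e1' : (HX.rank : ℤ) +
      (Module.finrank F ↥(LinearMap.ker A.mulVecLin ⊓ LinearMap.ker B.mulVecLin) : ℤ)
      = (ℓ : ℤ) * m := by exact_mod_cast e1
  have e2' : (HZ.rank : ℤ) +
      (Module.finrank F ↥(LinearMap.ker A.mulVecLin ⊓ LinearMap.ker B.mulVecLin) : ℤ)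
      = (ℓ : ℤ) * m := by exact_mod_cast e2
  linarith
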